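/- Let k ≥ 2 and n be integers with k + 2 ≤ n < 2^{k/2}. Then |F_n^{(k)} − 2^{n−2}| < 12 · 2^{n−2} / 2^{k/2}; equivalently, |F_n^{(k)} / 2^{n−2} − 1| < 12 / 2^{k/2}. -/
import Mathlib


/-- Auxiliary sequence: `gfib k i` is the `k`-generalized Fibonacci sequence re-indexed so that
index `i` corresponds to `n = i - (k - 2)`; i.e. `gfib k i = 0` for `i < k - 1`,
`gfib k (k-1) = 1`, and each later term is the sum of the `k` preceding terms. -/
def gfib (k : ℕ) (i : ℕ) : ℕ :=
  if _h1 : k < 2 then 0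
  else if _h2 : i + 1 < k then 0
  else if _h3 : i + 1 = k then 1
  else ∑ j ∈ Finset.range k, gfib k (i - 1 - j)
decreasing_by omega

/-- `genFib k n` is the `n`-th `k`-generalized Fibonacci number `F_n^{(k)}` (for `n ≥ 0`):
`F_0 = ⋯ = 0`, `F_1 = 1` and `F_n = F_{n-1} + ⋯ + F_{n-k}`. -/
def genFib (k : ℕ) (n : ℕ) : ℕ := gfib k (n + k - 2)

/-- `P m`: the largest prime factor of `m`, with `P 0 = P 1 = 1`. -/
def largestPrimeFactor (m : ℕ) : ℕ := max 1 (m.primeFactors.sup id)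

/-- The characteristic polynomial `Ψ_k(x) = x^k - x^{k-1} - ⋯ - x - 1` as a function. -/
def psiFun {R : Type*} [CommRing R] (k : ℕ) (x : R) : R := x ^ k - ∑ i ∈ Finset.range k, x ^ i

/-- `f_k(x) = (x - 1)/(2 + (k+1)(x-2))`. -/
noncomputable def fk (k : ℕ) (x : ℝ) : ℝ := (x - 1) / (2 + (k + 1) * (x - 2))

lemma gfib_zero (k i : ℕ) (h : i + 1 < k) : gfib k i = 0 := by
  rw [gfib, dif_neg (by omega), dif_pos h]

lemma gfib_base (k : ℕ) (hk : 2 ≤ k) : gfib k (k - 1) = 1 := by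
  rw [gfib, dif_neg (by omega), dif_neg (by omega), dif_pos (by omega)]

lemma gfib_rec (k i : ℕ) (hk : 2 ≤ k) (h : k ≤ i) :
    gfib k i = ∑ j ∈ Finset.range k, gfib k (i - 1 - j) := by
  rw [gfib, dif_neg (by omega), dif_neg (by omega), dif_neg (by omega)]

lemma gfib_k (k : ℕ) (hk : 2 ≤ k) : gfib k k = 1 := by
  rw [gfib_rec k k hk le_rfl]
  rw [Finset.sum_eq_single_of_mem 0 (Finset.mem_range.2 (by omega))]
  · simpa using gfib_base k hk
  · intro j hj hj0
    exact gfib_zero k _ (by simp only [Finset.mem_range] at hj; omega)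

lemma gfib_two_rec (k i : ℕ) (hk : 2 ≤ k) (h : k + 1 ≤ i) :
    gfib k i + gfib k (i - k - 1) = 2 * gfib k (i - 1) := by
  obtain ⟨m, rfl⟩ : ∃ m, k = m + 1 := ⟨k - 1, by omega⟩
  have e1 : gfib (m+1) i = ∑ j ∈ Finset.range m, gfib (m+1) (i - 2 - j) + gfib (m+1) (i - 1) := by
    rw [gfib_rec _ i hk (by omega), Finset.sum_range_succ']
    rw [show i - 1 - 0 = i - 1 by omega]
    congr 1
    exact Finset.sum_congr rfl fun j _ => by rw [show i - 1 - (j+1) = i - 2 - j by omega]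
  have e2 : gfib (m+1) (i - 1) = ∑ j ∈ Finset.range m, gfib (m+1) (i - 2 - j) + gfib (m+1) (i - (m+1) - 1) := by
    rw [gfib_rec _ (i-1) hk (by omega), Finset.sum_range_succ]
    rw [show i - 1 - 1 - m = i - (m+1) - 1 by omega]
    congr 1
    all_goals exact Finset.sum_congr rfl fun j _ => by rw [show i - 1 - 1 - j = i - 2 - j by omega]
  omega

lemma gfib_pow (k j : ℕ) (hk : 2 ≤ k) (hj : j ≤ k - 1) : gfib k (k + j) = 2 ^ j := by
  induction j with
  | zero => simpa using gfib_k k hk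
  | succ j ih =>
    have h2 := gfib_two_rec k (k + j + 1) hk (by omega)
    have hz : gfib k (k + j + 1 - k - 1) = 0 := by
      have : k + j + 1 - k - 1 = j := by omega
      rw [this]; exact gfib_zero k j (by omega)
    have hkj : k + j + 1 - 1 = k + j := by omega
    rw [hz, hkj, ih (by omega)] at h2
    rw [show k + (j+1) = k + j + 1 from rfl]
    omega

lemma gfib_le (k : ℕ) (hk : 2 ≤ k) : ∀ i, k - 1 ≤ i → gfib k i ≤ 2 ^ (i - k) := by
  intro i
  induction i using Nat.strong_induction_on with
  | _ i ih =>
    intro hi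
    rcases Nat.lt_or_ge i (k + 1) with h | h
    · -- i = k-1 or i = k
      rcases Nat.eq_or_lt_of_le hi with h1 | h1
      · rw [← h1, gfib_base k hk]; exact Nat.one_le_two_pow
      · have : i = k := by omega
        rw [this, gfib_k k hk]; exact Nat.one_le_two_pow
    · have h2 := gfib_two_rec k i hk h
      have h3 := ih (i - 1) (by omega) (by omega)
      have h4 : 2 * 2 ^ (i - 1 - k) = 2 ^ (i - k) := by
        rw [← pow_succ']; congr 1; omega
      omega

lemma gfib_ge (k : ℕ) (hk : 2 ≤ k) : ∀ m, 2 ^ (k - 1 + m) ≤ gfib k (2 * k - 1 + m) + m * 2 ^ m := by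
  intro m
  induction m with
  | zero =>
    have : gfib k (k + (k - 1)) = 2 ^ (k - 1) := gfib_pow k (k-1) hk le_rfl
    rw [show 2 * k - 1 + 0 = k + (k - 1) by omega, this, show k - 1 + 0 = k - 1 by omega]
    omega
  | succ m ih =>
    have h2 := gfib_two_rec k (2 * k + m) hk (by omega)
    have hidx1 : 2 * k + m - k - 1 = k - 1 + m := by omega
    have hidx2 : 2 * k + m - 1 = 2 * k - 1 + m := by omega
    rw [hidx1, hidx2] at h2
    have h3 : gfib k (k - 1 + m) ≤ 2 ^ m := by
      calc gfib k (k - 1 + m) ≤ 2 ^ (k - 1 + m - k) := gfib_le k hk _ (by omega)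
        _ ≤ 2 ^ m := Nat.pow_le_pow_right (by omega) (by omega)
    have e1 : 2 * k - 1 + (m + 1) = 2 * k + m := by omega
    have e2 : 2 ^ (k - 1 + (m + 1)) = 2 * 2 ^ (k - 1 + m) := by
      rw [show k - 1 + (m + 1) = (k - 1 + m) + 1 by omega, pow_succ']
    have e3 : (m + 1) * 2 ^ (m + 1) = 2 * (m * 2 ^ m) + 2 * 2 ^ m := by ring
    rw [e1, e2, e3]
    omega


/-- For integers `k ≥ 2` and `k + 2 ≤ n < 2^{k/2}`, one has
`|F_n^{(k)} - 2^{n-2}| < 12 · 2^{n-2} / 2^{k/2}`, equivalently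
`|F_n^{(k)} / 2^{n-2} - 1| < 12 / 2^{k/2}`. -/
theorem abs_genFib_sub_pow_lt (k n : ℕ) (hk : 2 ≤ k) (hn₁ : k + 2 ≤ n)
    (hn₂ : (n : ℝ) < 2 ^ ((k : ℝ) / 2)) :
    |(genFib k n : ℝ) - 2 ^ (n - 2)| < 12 * 2 ^ (n - 2) / 2 ^ ((k : ℝ) / 2) ∧
    |(genFib k n : ℝ) / 2 ^ (n - 2) - 1| < 12 / 2 ^ ((k : ℝ) / 2) := by
  set m : ℕ := n - k - 1 with hm
  have hFdef : genFib k n = gfib k (2 * k - 1 + m) := by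
    unfold genFib; congr 1; omega
  have hub : gfib k (2 * k - 1 + m) ≤ 2 ^ (n - 2) := by
    calc gfib k (2 * k - 1 + m) ≤ 2 ^ (2 * k - 1 + m - k) := gfib_le k hk _ (by omega)
      _ = 2 ^ (n - 2) := by congr 1; omega
  have hlb : 2 ^ (n - 2) ≤ gfib k (2 * k - 1 + m) + m * 2 ^ m := by
    have := gfib_ge k hk m
    rwa [show k - 1 + m = n - 2 by omega] at this
  set A : ℝ := 2 ^ ((k : ℝ) / 2) with hA
  have hApos : (0 : ℝ) < A := Real.rpow_pos_of_pos (by norm_num) _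
  have hAA : A * A = 2 ^ (n - 1) / 2 ^ m := by
    rw [hA, ← Real.rpow_add (by norm_num)]
    have : (k : ℝ) / 2 + (k : ℝ) / 2 = (k : ℕ) := by push_cast; ring
    rw [this, Real.rpow_natCast]
    rw [eq_div_iff (by positivity), ← pow_add]
    congr 1; omega
  have hPpos : (0 : ℝ) < 2 ^ (n - 2) := by positivity
  -- cast bounds to ℝ
  have hubR : (genFib k n : ℝ) ≤ 2 ^ (n - 2) := by
    rw [hFdef]
    calc ((gfib k (2 * k - 1 + m) : ℕ) : ℝ) ≤ ((2 ^ (n - 2) : ℕ) : ℝ) := Nat.cast_le.2 hub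
      _ = 2 ^ (n - 2) := by push_cast; ring
  have hlbR : (2 : ℝ) ^ (n - 2) ≤ (genFib k n : ℝ) + m * 2 ^ m := by
    rw [hFdef]
    have : ((2 ^ (n - 2) : ℕ) : ℝ) ≤ ((gfib k (2 * k - 1 + m) + m * 2 ^ m : ℕ) : ℝ) :=
      Nat.cast_le.2 hlb
    push_cast at this ⊢
    linarith
  have habs : |(genFib k n : ℝ) - 2 ^ (n - 2)| ≤ (m : ℝ) * 2 ^ m := by
    rw [abs_sub_le_iff]
    constructor
    · have : (0:ℝ) ≤ (m : ℝ) * 2 ^ m := by positivity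
      linarith
    · linarith
  have hmA : (m : ℝ) < A := by
    have hmn : m ≤ n := by omega
    exact lt_of_le_of_lt (Nat.cast_le.2 hmn) hn₂
  have hkey : (m : ℝ) * 2 ^ m < 12 * 2 ^ (n - 2) / A := by
    rw [lt_div_iff₀ hApos]
    have h2m : (0:ℝ) < 2 ^ m := by positivity
    have h1 : (m : ℝ) * 2 ^ m * A < A * 2 ^ m * A :=
      mul_lt_mul_of_pos_right (mul_lt_mul_of_pos_right hmA h2m) hApos
    have h2 : A * 2 ^ m * A = 2 ^ (n - 1) := by
      rw [show A * 2 ^ m * A = A * A * 2 ^ m by ring, hAA]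
      field_simp
    have h3 : (2:ℝ) ^ (n - 1) = 2 * 2 ^ (n - 2) := by
      rw [← pow_succ']; congr 1; omega
    nlinarith
  have part1 : |(genFib k n : ℝ) - 2 ^ (n - 2)| < 12 * 2 ^ (n - 2) / A :=
    lt_of_le_of_lt habs hkey
  refine ⟨part1, ?_⟩
  have : (genFib k n : ℝ) / 2 ^ (n - 2) - 1 = ((genFib k n : ℝ) - 2 ^ (n - 2)) / 2 ^ (n - 2) := by
    field_simp
  rw [this, abs_div, abs_of_pos hPpos]
  rw [div_lt_iff₀ hPpos]
  have : 12 / A * 2 ^ (n - 2) = 12 * 2 ^ (n - 2) / A := by ring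
  rw [this]
  exact part1
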